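/- The term rewrite system over the signature {nat, 0 (constants), hd, tl, inc, s, d (unary), cons (binary)} with rules nat → cons(0, inc(nat)), hd(cons(x,y)) → x, tl(cons(x,y)) → y, inc(cons(x,y)) → cons(s(x), inc(y)), inc(tl(nat)) → tl(inc(nat)), and d(cons(x,y)) → cons(x, cons(x, d(y))) is confluent (this system is left-linear but not right-linear). -/
import Mathlib


open Relation

/-- Ground terms over the signature
{nat, 0 (constants), hd, tl, inc, s, d (unary), cons (binary)}. -/
inductive Tm : Type where
  | nat : Tm
  | zero : Tm
  | hd : Tm → Tm
  | tl : Tm → Tm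
  | inc : Tm → Tm
  | s : Tm → Tm
  | d : Tm → Tm
  | cons : Tm → Tm → Tm

/-- The one-step rewrite relation generated by the rules
`nat → cons(0, inc(nat))`, `hd(cons(x,y)) → x`, `tl(cons(x,y)) → y`,
`inc(cons(x,y)) → cons(s(x), inc(y))`, `inc(tl(nat)) → tl(inc(nat))`,
`d(cons(x,y)) → cons(x, cons(x, d(y)))`, closed under contexts. -/
inductive Step : Tm → Tm → Prop where
  | nat_rule : Step .nat (.cons .zero (.inc .nat))
  | hd_rule (t u : Tm) : Step (.hd (.cons t u)) t
  | tl_rule (t u : Tm) : Step (.tl (.cons t u)) u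
  | inc_rule (t u : Tm) : Step (.inc (.cons t u)) (.cons (.s t) (.inc u))
  | inc_tl_rule : Step (.inc (.tl .nat)) (.tl (.inc .nat))
  | d_rule (t u : Tm) : Step (.d (.cons t u)) (.cons t (.cons t (.d u)))
  | hd_cong {t u : Tm} : Step t u → Step (.hd t) (.hd u)
  | tl_cong {t u : Tm} : Step t u → Step (.tl t) (.tl u)
  | inc_cong {t u : Tm} : Step t u → Step (.inc t) (.inc u)
  | s_cong {t u : Tm} : Step t u → Step (.s t) (.s u)
  | d_cong {t u : Tm} : Step t u → Step (.d t) (.d u)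
  | cons_congl {t u : Tm} (v : Tm) : Step t u → Step (.cons t v) (.cons u v)
  | cons_congr {t u : Tm} (v : Tm) : Step t u → Step (.cons v t) (.cons v u)

/-- Confluence of a binary relation. -/
def Confluent {A : Type*} (r : A → A → Prop) : Prop :=
  ∀ s t u, ReflTransGen r s t → ReflTransGen r s u →
    ∃ v, ReflTransGen r t v ∧ ReflTransGen r u v

-- auxiliary development, to be spliced into proof.lean before the theorem
namespace ZProof

abbrev Rs := ReflTransGen Step

/-- Lift single-step facts about a function to multi-step facts. -/
lemma star_lift {g : Tm → Tm} (hg : ∀ {a b : Tm}, Step a b → Rs (g a) (g b))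
    {x y : Tm} (h : Rs x y) : Rs (g x) (g y) := by
  induction h with
  | refl => exact .refl
  | tail _ h2 ih => exact ih.trans (hg h2)

lemma hdS {x y : Tm} (h : Rs x y) : Rs (.hd x) (.hd y) :=
  star_lift (fun h => .single (.hd_cong h)) h
lemma tlS {x y : Tm} (h : Rs x y) : Rs (.tl x) (.tl y) :=
  star_lift (fun h => .single (.tl_cong h)) h
lemma incS {x y : Tm} (h : Rs x y) : Rs (.inc x) (.inc y) :=
  star_lift (fun h => .single (.inc_cong h)) h
lemma sS {x y : Tm} (h : Rs x y) : Rs (.s x) (.s y) :=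
  star_lift (fun h => .single (.s_cong h)) h
lemma dS {x y : Tm} (h : Rs x y) : Rs (.d x) (.d y) :=
  star_lift (fun h => .single (.d_cong h)) h
lemma consS {x y a b : Tm} (h1 : Rs x y) (h2 : Rs a b) :
    Rs (.cons x a) (.cons y b) :=
  ReflTransGen.trans
    (star_lift (g := fun t => .cons t a) (fun h => .single (.cons_congl _ h)) h1)
    (star_lift (g := fun t => .cons y t) (fun h => .single (.cons_congr _ h)) h2)

/-- One level of "superdevelopment" helpers. -/
def fhd : Tm → Tm
  | .cons a _ => a
  | x => .hd x

def ftl : Tm → Tm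
  | .cons _ b => b
  | x => .tl x

def finc : Tm → Tm
  | .cons a b => .cons (.s a) (.inc b)
  | x => .inc x

def fd : Tm → Tm
  | .cons a b => .cons a (.cons a (.d b))
  | x => .d x

/-- Full superdevelopment. -/
def f : Tm → Tm
  | .nat => .cons .zero (.inc .nat)
  | .zero => .zero
  | .hd t => fhd (f t)
  | .tl t => ftl (f t)
  | .inc t => finc (f t)
  | .s t => .s (f t)
  | .d t => fd (f t)
  | .cons a b => .cons (f a) (f b)

lemma hd_fhd (x : Tm) : Rs (.hd x) (fhd x) := by
  cases x <;> first
    | exact .refl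
    | exact .single (.hd_rule _ _)

lemma tl_ftl (x : Tm) : Rs (.tl x) (ftl x) := by
  cases x <;> first
    | exact .refl
    | exact .single (.tl_rule _ _)

lemma inc_finc (x : Tm) : Rs (.inc x) (finc x) := by
  cases x <;> first
    | exact .refl
    | exact .single (.inc_rule _ _)

lemma d_fd (x : Tm) : Rs (.d x) (fd x) := by
  cases x <;> first
    | exact .refl
    | exact .single (.d_rule _ _)

lemma fhd_mono {x y : Tm} (h : Step x y) : Rs (fhd x) (fhd y) := by
  cases x <;> first
    | exact (ReflTransGen.single (Step.hd_cong h)).trans (hd_fhd y)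
    | (cases h with
        | cons_congl v h' => exact .single h'
        | cons_congr v h' => exact .refl)

lemma ftl_mono {x y : Tm} (h : Step x y) : Rs (ftl x) (ftl y) := by
  cases x <;> first
    | exact (ReflTransGen.single (Step.tl_cong h)).trans (tl_ftl y)
    | (cases h with
        | cons_congl v h' => exact .refl
        | cons_congr v h' => exact .single h')

lemma finc_mono {x y : Tm} (h : Step x y) : Rs (finc x) (finc y) := by
  cases x <;> first
    | exact (ReflTransGen.single (Step.inc_cong h)).trans (inc_finc y)
    | (cases h with
        | cons_congl v h' => exact .single (.cons_congl _ (.s_cong h'))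
        | cons_congr v h' => exact .single (.cons_congr _ (.inc_cong h')))

lemma fd_mono {x y : Tm} (h : Step x y) : Rs (fd x) (fd y) := by
  cases x <;> first
    | exact (ReflTransGen.single (Step.d_cong h)).trans (d_fd y)
    | (cases h with
        | cons_congl v h' =>
            exact (ReflTransGen.single (.cons_congl _ h')).trans
              (.single (.cons_congr _ (.cons_congl _ h')))
        | cons_congr v h' => exact .single (.cons_congr _ (.cons_congr _ (.d_cong h'))))

/-- Extensivity: every term reduces to its superdevelopment. -/
lemma ext_f (t : Tm) : Rs t (f t) := by
  induction t with
  | nat => exact .single .nat_rule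
  | zero => exact .refl
  | hd t ih => exact (hdS ih).trans (hd_fhd (f t))
  | tl t ih => exact (tlS ih).trans (tl_ftl (f t))
  | inc t ih => exact (incS ih).trans (inc_finc (f t))
  | s t ih => exact sS ih
  | d t ih => exact (dS ih).trans (d_fd (f t))
  | cons a b iha ihb => exact consS iha ihb

/-- Z-property, part 1: `a → b` implies `b →* f a`. -/
lemma step_to_f {a b : Tm} (h : Step a b) : Rs b (f a) := by
  induction h with
  | nat_rule => exact .refl
  | hd_rule t u => exact ext_f t
  | tl_rule t u => exact ext_f u
  | inc_rule t u => exact consS (sS (ext_f t)) (incS (ext_f u))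
  | inc_tl_rule =>
      -- tl (inc nat) →* inc (inc nat) = f (inc (tl nat))
      refine ReflTransGen.head (Step.tl_cong (Step.inc_cong Step.nat_rule)) ?_
      refine ReflTransGen.head (Step.tl_cong (Step.inc_rule _ _)) ?_
      exact .single (.tl_rule _ _)
  | d_rule t u => exact consS (ext_f t) (consS (ext_f t) (dS (ext_f u)))
  | hd_cong h ih => exact (hdS ih).trans (hd_fhd _)
  | tl_cong h ih => exact (tlS ih).trans (tl_ftl _)
  | inc_cong h ih => exact (incS ih).trans (inc_finc _)
  | s_cong h ih => exact sS ih
  | d_cong h ih => exact (dS ih).trans (d_fd _)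
  | cons_congl v h ih => exact consS ih (ext_f v)
  | cons_congr v h ih => exact consS (ext_f v) ih

/-- Z-property, part 2: `a → b` implies `f a →* f b`. -/
lemma f_mono {a b : Tm} (h : Step a b) : Rs (f a) (f b) := by
  induction h with
  | nat_rule =>
      -- cons 0 (inc nat) →* cons 0 (cons (s 0) (inc (inc nat)))
      refine ReflTransGen.head (Step.cons_congr _ (Step.inc_cong Step.nat_rule)) ?_
      exact .single (.cons_congr _ (.inc_rule _ _))
  | hd_rule t u => exact .refl
  | tl_rule t u => exact .refl
  | inc_rule t u => exact star_lift (fun h => .single (.cons_congr _ h)) (inc_finc (f u))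
  | inc_tl_rule => exact .refl
  | d_rule t u =>
      exact star_lift (fun h => .single (.cons_congr _ (.cons_congr _ h))) (d_fd (f u))
  | hd_cong h ih => exact star_lift fhd_mono ih
  | tl_cong h ih => exact star_lift ftl_mono ih
  | inc_cong h ih => exact star_lift finc_mono ih
  | s_cong h ih => exact sS ih
  | d_cong h ih => exact star_lift fd_mono ih
  | cons_congl v h ih => exact consS ih .refl
  | cons_congr v h ih => exact consS .refl ih

lemma to_f_of_rtg {a b c : Tm} (hab : Step a b) (hac : Rs a c) : Rs b (f c) := by
  induction hac with
  | refl => exact step_to_f hab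
  | tail _ h ih => exact ih.trans (f_mono h)

end ZProof

/-- The left-linear (but not right-linear) TRS `{nat → cons(0, inc(nat)),
hd(cons(x,y)) → x, tl(cons(x,y)) → y, inc(cons(x,y)) → cons(s(x), inc(y)),
inc(tl(nat)) → tl(inc(nat)), d(cons(x,y)) → cons(x, cons(x, d(y)))}`
is confluent. -/
theorem example_confluent : Confluent Step := by
  intro s t u hst hsu
  induction hst with
  | refl => exact ⟨u, hsu, .refl⟩
  | tail _ h ih =>
      obtain ⟨v, htv, huv⟩ := ih
      exact ⟨ZProof.f v, ZProof.to_f_of_rtg h htv, huv.trans (ZProof.ext_f v)⟩
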